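/- Let X* ∈ 𝒮ⁿ minimize a convex differentiable f over the spectrahedron 𝒮ⁿ, and suppose rank(X*) = r. Then the first-order optimality condition implies that λₙ(∇f(X*)) = λ_{n−r+1}(∇f(X*)); that is, the smallest eigenvalue of the gradient at an optimum of rank r has multiplicity at least r, and Im(X*) is contained in the eigenspace of ∇f(X*) corresponding to its minimal eigenvalue. -/

import Mathlib

open Matrix

lemma psd_diag_nonneg {n : ℕ} {M : Matrix (Fin n) (Fin n) ℝ} (h : M.PosSemidef) (i : Fin n) :
    0 ≤ M i i := by
  have := h.dotProduct_mulVec_nonneg (Pi.single i 1)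
  simpa [dotProduct, Matrix.mulVec, Pi.single_apply] using this

lemma psd_entry_zero {n : ℕ} {M : Matrix (Fin n) (Fin n) ℝ} (h : M.PosSemidef)
    {i : Fin n} (hi : M i i = 0) (j : Fin n) : M i j = 0 := by
  obtain ⟨A, hA⟩ : ∃ A : Matrix (Fin n) (Fin n) ℝ, M = star A * A := by
    open scoped MatrixOrder in exact CStarAlgebra.nonneg_iff_eq_star_mul_self.mp h.nonneg
  rw [star_eq_conjTranspose] at hA
  subst hA
  have hMii : ∑ k, A k i * A k i = 0 := by
    simpa [Matrix.mul_apply, Matrix.conjTranspose_apply] using hi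
  have hz : ∀ k, A k i = 0 := fun k =>
    mul_self_eq_zero.mp
      ((Finset.sum_eq_zero_iff_of_nonneg (fun k _ => mul_self_nonneg (A k i))).mp hMii k
        (Finset.mem_univ k))
  simp [Matrix.mul_apply, Matrix.conjTranspose_apply, hz]

/-- The spectrahedron: real symmetric PSD matrices with unit trace. -/
def Spectrahedron {n : ℕ} (X : Matrix (Fin n) (Fin n) ℝ) : Prop :=
  X.PosSemidef ∧ X.trace = 1

theorem stmt18 {n r : ℕ} (hn : 0 < n) (hr : 0 < r)
    (f : Matrix (Fin n) (Fin n) ℝ → ℝ)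
    (gradf : Matrix (Fin n) (Fin n) ℝ → Matrix (Fin n) (Fin n) ℝ)
    (hconv : ∀ X Y, Spectrahedron X → Spectrahedron Y →
      f X + ((Y - X)ᵀ * gradf X).trace ≤ f Y)
    (Xstar : Matrix (Fin n) (Fin n) ℝ)
    (hXs : Spectrahedron Xstar) (hrank : Xstar.rank = r)
    (hmin : ∀ Y, Spectrahedron Y → f Xstar ≤ f Y)
    (hopt : ∀ Y, Spectrahedron Y → 0 ≤ ((Y - Xstar)ᵀ * gradf Xstar).trace)
    (U : Matrix (Fin n) (Fin n) ℝ) (μ : Fin n → ℝ)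
    (hU : Uᵀ * U = 1) (hμ : Antitone μ)
    (hG : gradf Xstar = U * Matrix.diagonal μ * Uᵀ) :
    μ ⟨n - r, by omega⟩ = μ ⟨n - 1, by omega⟩ ∧
    ∀ v : Fin n → ℝ, (∃ w, Xstar.mulVec w = v) →
      (gradf Xstar).mulVec v = μ ⟨n - 1, by omega⟩ • v := by
  classical
  obtain ⟨hpsd, htr⟩ := hXs
  have hUU : U * Uᵀ = 1 := mul_eq_one_comm.mp hU
  set μmin := μ ⟨n - 1, by omega⟩ with hμmindef
  have hμge : ∀ j : Fin n, μmin ≤ μ j := by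
    intro j
    refine hμ ?_
    rw [Fin.le_def]
    have := j.isLt
    simp only []
    omega
  set M : Matrix (Fin n) (Fin n) ℝ := Uᵀ * Xstar * U with hMdef
  have hMpsd : M.PosSemidef := by
    have := hpsd.conjTranspose_mul_mul_same U
    simpa [Matrix.conjTranspose_eq_transpose_of_trivial] using this
  have hXdecomp : Xstar = U * M * Uᵀ := by
    have h1 : U * (Uᵀ * Xstar * U) * Uᵀ = (U * Uᵀ) * Xstar * (U * Uᵀ) := by
      simp only [Matrix.mul_assoc]
    rw [hMdef, h1, hUU, Matrix.one_mul, Matrix.mul_one]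
  have htrM : M.trace = 1 := by
    rw [hMdef, Matrix.trace_mul_comm, ← Matrix.mul_assoc, hUU, Matrix.one_mul, htr]
  have hMsum : ∑ k, M k k = 1 := by simpa [Matrix.trace, Matrix.diag] using htrM
  have hsym : Xstarᵀ = Xstar := by
    rw [← Matrix.conjTranspose_eq_transpose_of_trivial]; exact hpsd.isHermitian
  have htraceXG : (Xstarᵀ * gradf Xstar).trace = ∑ i, M i i * μ i := by
    rw [hsym, hG]
    have h1 : Xstar * (U * Matrix.diagonal μ * Uᵀ) = (Xstar * U * Matrix.diagonal μ) * Uᵀ := by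
      simp only [Matrix.mul_assoc]
    rw [h1, Matrix.trace_mul_comm]
    have h2 : Uᵀ * (Xstar * U * Matrix.diagonal μ) = M * Matrix.diagonal μ := by
      rw [hMdef]; simp only [Matrix.mul_assoc]
    rw [h2]
    simp [Matrix.trace, Matrix.diag, Matrix.mul_diagonal]
  have hGsym : (gradf Xstar)ᵀ = gradf Xstar := by
    rw [hG]
    simp [Matrix.transpose_mul, Matrix.diagonal_transpose, Matrix.mul_assoc]
  have hGab : ∀ a b, gradf Xstar a b = gradf Xstar b a := fun a b =>
    congrFun (congrFun hGsym.symm a) b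
  have hGU : gradf Xstar * U = U * Matrix.diagonal μ := by
    rw [hG]; simp only [Matrix.mul_assoc, hU, Matrix.mul_one]
  -- key inequality from optimality
  have hkey : ∀ i : Fin n, ∑ k, M k k * μ k ≤ μ i := by
    intro i
    set u : Fin n → ℝ := U *ᵥ Pi.single i 1 with hu
    set Y : Matrix (Fin n) (Fin n) ℝ := Matrix.of fun a b => u a * u b with hY
    have huu : ∑ a, u a * u a = 1 := by
      have h1 : (Uᵀ * U) i i = 1 := by rw [hU]; simp
      rw [Matrix.mul_apply] at h1
      simp only [Matrix.transpose_apply] at h1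
      simpa [hu, Matrix.mulVec_single, mul_one] using h1
    have hYpsd : Y.PosSemidef := by
      refine Matrix.PosSemidef.of_dotProduct_mulVec_nonneg ?_ ?_
      · ext a b
        simp [hY, Matrix.conjTranspose_apply, mul_comm]
      · intro x
        have hx : (star x) ⬝ᵥ (Y *ᵥ x) = (∑ a, u a * x a) * (∑ b, u b * x b) := by
          simp only [star_trivial, dotProduct, Matrix.mulVec, hY, Matrix.of_apply]
          rw [Finset.sum_mul_sum]
          refine Finset.sum_congr rfl fun a _ => ?_
          rw [Finset.mul_sum]
          refine Finset.sum_congr rfl fun b _ => ?_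
          ring
        rw [hx]
        exact mul_self_nonneg _
    have hYtr : Y.trace = 1 := by
      simpa [Matrix.trace, Matrix.diag, hY] using huu
    have hGu : gradf Xstar *ᵥ u = μ i • u := by
      rw [hu, Matrix.mulVec_mulVec, hGU]
      ext a
      simp [Matrix.mulVec_single, Matrix.mul_diagonal, mul_comm]
    have htrY : (Yᵀ * gradf Xstar).trace = μ i := by
      have h1 : (Yᵀ * gradf Xstar).trace = ∑ a, u a * (gradf Xstar *ᵥ u) a := by
        simp only [Matrix.trace, Matrix.diag, Matrix.mul_apply, Matrix.transpose_apply, hY,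
          Matrix.of_apply, Matrix.mulVec, dotProduct]
        refine Finset.sum_congr rfl fun a _ => ?_
        rw [Finset.mul_sum]
        refine Finset.sum_congr rfl fun c _ => ?_
        rw [hGab c a]; ring
      rw [h1, hGu]
      have h2 : ∑ a, u a * (μ i • u) a = μ i * ∑ a, u a * u a := by
        rw [Finset.mul_sum]
        refine Finset.sum_congr rfl fun a _ => ?_
        simp [smul_eq_mul]; ring
      rw [h2, huu, mul_one]
    have h0 := hopt Y ⟨hYpsd, hYtr⟩
    rw [Matrix.transpose_sub, Matrix.sub_mul, Matrix.trace_sub, htrY, htraceXG] at h0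
    linarith
  have hdiagnn : ∀ i, 0 ≤ M i i := psd_diag_nonneg hMpsd
  have hlow : μmin ≤ ∑ k, M k k * μ k := by
    have h1 : ∑ k, M k k * μmin ≤ ∑ k, M k k * μ k :=
      Finset.sum_le_sum fun k _ => mul_le_mul_of_nonneg_left (hμge k) (hdiagnn k)
    have h2 : ∑ k, M k k * μmin = μmin := by
      rw [← Finset.sum_mul, hMsum, one_mul]
    linarith
  have heq : ∑ k, M k k * μ k = μmin := le_antisymm (hkey ⟨n - 1, by omega⟩) hlow
  have hterm : ∀ k, M k k * (μ k - μmin) = 0 := by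
    have hsum0 : ∑ k, M k k * (μ k - μmin) = 0 := by
      simp_rw [mul_sub]
      rw [Finset.sum_sub_distrib, heq, ← Finset.sum_mul, hMsum, one_mul, sub_self]
    intro k
    exact (Finset.sum_eq_zero_iff_of_nonneg
      (fun k _ => mul_nonneg (hdiagnn k) (sub_nonneg.mpr (hμge k)))).mp hsum0 k (Finset.mem_univ k)
  have hMrow : ∀ k, μ k ≠ μmin → ∀ j, M k j = 0 := by
    intro k hk j
    rcases mul_eq_zero.mp (hterm k) with h | h
    · exact psd_entry_zero hMpsd h j
    · exact absurd (sub_eq_zero.mp h) hk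
  have hDM : Matrix.diagonal μ * M = μmin • M := by
    ext a b
    rw [Matrix.diagonal_mul]
    by_cases h : μ a = μmin
    · simp [h]
    · simp [hMrow a h b]
  have hGX : gradf Xstar * Xstar = μmin • Xstar := by
    calc gradf Xstar * Xstar = (U * Matrix.diagonal μ * Uᵀ) * (U * M * Uᵀ) := by
          rw [← hG, ← hXdecomp]
      _ = ((U * Matrix.diagonal μ) * ((Uᵀ * U) * M)) * Uᵀ := by simp only [Matrix.mul_assoc]
      _ = ((U * Matrix.diagonal μ) * M) * Uᵀ := by rw [hU, Matrix.one_mul]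
      _ = (U * (μmin • M)) * Uᵀ := by rw [Matrix.mul_assoc U, hDM]
      _ = μmin • (U * M * Uᵀ) := by rw [mul_smul_comm, smul_mul_assoc]
      _ = μmin • Xstar := by rw [← hXdecomp]
  have part2 : ∀ v : Fin n → ℝ, (∃ w, Xstar.mulVec w = v) →
      (gradf Xstar).mulVec v = μmin • v := by
    rintro v ⟨w, rfl⟩
    rw [Matrix.mulVec_mulVec, hGX, Matrix.smul_mulVec]
  have hdetU : IsUnit U.det := by
    apply IsUnit.of_mul_eq_one Uᵀ.det
    rw [← Matrix.det_mul, hUU, Matrix.det_one]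
  have hdetUT : IsUnit Uᵀ.det := by rw [Matrix.det_transpose]; exact hdetU
  have hrankM : M.rank = r := by
    rw [← hrank, hXdecomp]
    rw [Matrix.rank_mul_eq_left_of_isUnit_det Uᵀ (U * M) hdetUT,
      Matrix.rank_mul_eq_right_of_isUnit_det U M hdetU]
  have part1 : μ ⟨n - r, by omega⟩ = μmin := by
    by_contra hne
    have hgt : μmin < μ ⟨n - r, by omega⟩ := lt_of_le_of_ne (hμge _) (Ne.symm hne)
    set P := Matrix.diagonal (fun i => if μ i = μmin then (1 : ℝ) else 0) with hP
    have hPM : P * M = M := by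
      ext i j
      rw [hP, Matrix.diagonal_mul]
      by_cases h : μ i = μmin
      · simp [h]
      · simp [h, hMrow i h j]
    have hrle : M.rank ≤ Fintype.card {i // μ i = μmin} := by
      calc M.rank = (P * M).rank := by rw [hPM]
        _ ≤ P.rank := Matrix.rank_mul_le_left P M
        _ = Fintype.card {i // (if μ i = μmin then (1 : ℝ) else 0) ≠ 0} :=
            Matrix.rank_diagonal _
        _ = Fintype.card {i // μ i = μmin} := Fintype.card_congr
            (Equiv.subtypeEquivRight fun i => by by_cases h : μ i = μmin <;> simp [h])
    have hsub : Fintype.card {i : Fin n // μ i = μmin} ≤ r - 1 := by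
      rw [Fintype.card_subtype]
      have hss : Finset.univ.filter (fun i : Fin n => μ i = μmin) ⊆
          Finset.Ioi (⟨n - r, by omega⟩ : Fin n) := by
        intro i hi
        rw [Finset.mem_filter] at hi
        rw [Finset.mem_Ioi]
        by_contra hle
        push_neg at hle
        have h2 := hμ hle
        rw [hi.2] at h2
        exact absurd h2 (not_le.mpr hgt)
      calc (Finset.univ.filter (fun i : Fin n => μ i = μmin)).card
          ≤ (Finset.Ioi (⟨n - r, by omega⟩ : Fin n)).card := Finset.card_le_card hss
        _ = n - 1 - (n - r) := by rw [Fin.card_Ioi]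
        _ ≤ r - 1 := by omega
    rw [hrankM] at hrle
    have := le_trans hrle hsub
    omega
  exact ⟨part1, part2⟩
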